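/- Let n and m be integers with m odd, 3 ≤ m ≤ n, and let θ : {1,…,n} → ℝ be strictly positive with Ω_{jk} = θ_j θ_k / (1 + θ_j θ_k) for j ≠ k. Let {A_{jk} : 1 ≤ j < k ≤ n} be mutually independent random variables, each taking values in {0,1} with ℙ(A_{jk} = 1) = Ω_{jk}, and extend symmetrically by A_{kj} = A_{jk}. Fix i1 and define φ^{(1)} = ∑ A_{i1 i2}(1 − A_{i2 i3}) ⋯ (1 − A_{i_{m-1} i_m}) A_{i_m i1} and φ^{(2)} = ∑ (1 − A_{i1 i2}) A_{i2 i3} ⋯ A_{i_{m-1} i_m} (1 − A_{i_m i1}), where both sums range over all tuples (i2,…,i_m) of pairwise distinct indices in {1,…,n} \ {i1} and the factors alternate along the closed cycle i1 → i2 → ⋯ → i_m → i1. Then 𝔼[φ^{(1)}] = θ_{i1}^2 · 𝔼[φ^{(2)}]. -/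

import Mathlib

open MeasureTheory

lemma integrable01 {α : Type*} [MeasurableSpace α] (μ : Measure α) [IsProbabilityMeasure μ]
    (f : α → ℝ) (hm : Measurable f) (h01 : ∀ ω, f ω = 0 ∨ f ω = 1) : Integrable f μ := by
  refine ⟨hm.aestronglyMeasurable, HasFiniteIntegral.of_bounded (C := 1) (ae_of_all μ ?_)⟩
  intro ω; rcases h01 ω with h | h <;> simp [h]

lemma prod01 {ι α : Type*} (f : ι → α → ℝ) (s : Finset ι)
    (h01 : ∀ i ∈ s, ∀ ω, f i ω = 0 ∨ f i ω = 1) (ω : α) :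
    (∏ i ∈ s, f i ω) = 0 ∨ (∏ i ∈ s, f i ω) = 1 := by
  classical
  induction s using Finset.induction_on with
  | empty => simp
  | @insert a s' hnot ih =>
    rw [Finset.prod_insert hnot]
    rcases h01 a (Finset.mem_insert_self a s') ω with h | h
    · left; simp [h]
    · rcases ih (fun i hi => h01 i (Finset.mem_insert_of_mem hi)) with h' | h'
      · left; simp [h, h']
      · right; simp [h, h']

lemma integral_prod01 {ι α : Type*} [MeasurableSpace α] (μ : Measure α) [IsProbabilityMeasure μ]
    (Y : ι → α → ℝ) (hm : ∀ i, Measurable (Y i)) (h01 : ∀ i ω, Y i ω = 0 ∨ Y i ω = 1)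
    (hind : ProbabilityTheory.iIndepFun Y μ) (s : Finset ι) :
    ∫ ω, ∏ i ∈ s, Y i ω ∂μ = ∏ i ∈ s, ∫ ω, Y i ω ∂μ := by
  classical
  induction s using Finset.induction_on with
  | empty => simp
  | @insert a s' hnot ih =>
    have hint : ∀ (t : Finset ι), Integrable (fun ω => ∏ i ∈ t, Y i ω) μ :=
      fun t => integrable01 μ _ (Finset.measurable_prod t (fun i _ => hm i))
        (prod01 Y t (fun i _ => h01 i))
    have h2 : (∏ j ∈ s', Y j) = fun ω => ∏ i ∈ s', Y i ω := by
      funext ω; simp [Finset.prod_apply]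
    have hindep := (hind.indepFun_finset_prod_of_notMem hm hnot).symm
    have := hindep.integral_mul_eq_mul_integral
      (integrable01 μ _ (hm a) (h01 a)).aestronglyMeasurable (h2 ▸ hint s').aestronglyMeasurable
    calc ∫ ω, ∏ i ∈ insert a s', Y i ω ∂μ
        = ∫ ω, (Y a * ∏ j ∈ s', Y j) ω ∂μ := by
          congr 1; funext ω; simp [Finset.prod_insert hnot, Finset.prod_apply]
      _ = (∫ ω, Y a ω ∂μ) * ∫ ω, (∏ j ∈ s', Y j) ω ∂μ := this
      _ = ∏ i ∈ insert a s', ∫ ω, Y i ω ∂μ := by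
          rw [Finset.prod_insert hnot, ← ih]; congr 1; simp [Finset.prod_apply]

lemma iIndepFun_reindex {ι κ α β : Type*} [MeasurableSpace α] [MeasurableSpace β]
    {μ : Measure α} {X : ι → α → β}
    (h : ProbabilityTheory.iIndepFun X μ)
    (σ : κ → ι) (hσ : Function.Injective σ) [Nonempty κ] :
    ProbabilityTheory.iIndepFun (fun k => X (σ k)) μ := by
  classical
  rw [ProbabilityTheory.iIndepFun_iff_measure_inter_preimage_eq_mul] at h ⊢
  intro S sets hsets
  set τ : ι → κ := Function.invFun σ with hτ
  have hτσ : ∀ k, τ (σ k) = k := fun k => Function.leftInverse_invFun hσ k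
  set sets' : ∀ _ : ι, Set β := fun i => if i ∈ S.image σ then sets (τ i) else Set.univ with hsets'
  have key : ∀ k ∈ S, sets' (σ k) = sets k := by
    intro k hk
    simp only [hsets']
    rw [if_pos (Finset.mem_image_of_mem σ hk), hτσ]
  have h1 := h (S.image σ) (sets := sets') ?_
  · rw [Finset.prod_image (fun a _ b _ hab => hσ hab)] at h1
    have h2 : (⋂ i ∈ S.image σ, X i ⁻¹' sets' i) = ⋂ k ∈ S, X (σ k) ⁻¹' sets k := by
      ext ω
      simp only [Set.mem_iInter, Finset.mem_image]
      constructor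
      · intro hh k hk
        have := hh (σ k) ⟨k, hk, rfl⟩
        rwa [key k hk] at this
      · rintro hh i ⟨k, hk, rfl⟩
        rw [key k hk]; exact hh k hk
    rw [h2] at h1
    rw [h1]
    exact Finset.prod_congr rfl (fun k hk => by rw [key k hk])
  · intro i hi
    rcases Finset.mem_image.mp hi with ⟨k, hk, rfl⟩
    simpa only [hsets', if_pos hi, hτσ] using hsets k hk

lemma telescope_prod (m : ℕ) (hm3 : 3 ≤ m) (hodd : Odd m) (q : Fin m → ℝ)
    (hq : ∀ e, 0 < q e) :
    ∏ e : Fin m, (if e.val % 2 = 0 then q e * q ⟨(e.val + 1) % m, Nat.mod_lt _ (by omega)⟩ else 1)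
    = (q ⟨0, by omega⟩)^2 *
      ∏ e : Fin m, (if e.val % 2 = 0 then 1
        else q e * q ⟨(e.val + 1) % m, Nat.mod_lt _ (by omega)⟩) := by
  have hm0 : 0 < m := by omega
  set nxt : Fin m → Fin m := fun e => ⟨(e.val + 1) % m, Nat.mod_lt _ hm0⟩ with hnxt
  set p : Fin m → ℝ := fun e => q e * q (nxt e) with hp
  have hppos : ∀ e, 0 < p e := fun e => mul_pos (hq e) (hq (nxt e))
  set s : Fin m → ℤ := fun e => if e.val % 2 = 0 then 1 else -1 with hs
  set w : Fin m → ℤ := fun e => if e.val = 0 then 1 else (if e.val % 2 = 0 then -1 else 1) with hw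
  -- step 1
  have step1 : ∀ e : Fin m, (if e.val % 2 = 0 then p e else 1)
      = (p e) ^ (s e) * (if e.val % 2 = 0 then 1 else p e) := by
    intro e
    by_cases h : e.val % 2 = 0 <;> simp [hs, h, zpow_neg_one,
      inv_mul_cancel₀ (ne_of_gt (hppos e))]
  -- the cyclic permutation
  have left_inv : ∀ e : Fin m, ((((e.val + 1) % m) + m - 1) % m) = e.val := by
    intro e
    have he : e.val < m := e.isLt
    rcases Nat.lt_or_ge (e.val + 1) m with h | h
    · rw [Nat.mod_eq_of_lt h]
      have : e.val + 1 + m - 1 = e.val + m := by omega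
      rw [this, Nat.add_mod_right, Nat.mod_eq_of_lt he]
    · have h1 : e.val + 1 = m := by omega
      rw [h1, Nat.mod_self]
      have : 0 + m - 1 = m - 1 := by omega
      rw [this, Nat.mod_eq_of_lt (by omega)]
      omega
  have right_inv : ∀ e : Fin m, (((e.val + m - 1) % m) + 1) % m = e.val := by
    intro e
    have he : e.val < m := e.isLt
    rcases Nat.eq_zero_or_pos e.val with h | h
    · rw [h]
      have h0 : 0 + m - 1 = m - 1 := by omega
      have h2 : (0 + m - 1) % m = m - 1 := by rw [h0]; exact Nat.mod_eq_of_lt (by omega)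
      rw [h2]
      have h3 : m - 1 + 1 = m := by omega
      rw [h3, Nat.mod_self]
    · have h1 : e.val + m - 1 = (e.val - 1) + m := by omega
      have h2 : (e.val - 1 + m) % m = e.val - 1 := by
        rw [Nat.add_mod_right]; exact Nat.mod_eq_of_lt (by omega)
      rw [h1, h2]
      have h3 : e.val - 1 + 1 = e.val := by omega
      rw [h3, Nat.mod_eq_of_lt he]
  set σ : Equiv.Perm (Fin m) :=
    ⟨nxt, fun e => ⟨(e.val + m - 1) % m, Nat.mod_lt _ hm0⟩,
      fun e => Fin.ext (left_inv e), fun e => Fin.ext (right_inv e)⟩ with hσ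
  -- step 3 : reindex
  have hws : ∀ e : Fin m, w (σ e) = s e := by
    intro e
    have he : e.val < m := e.isLt
    simp only [hσ, hw, hs, Equiv.coe_fn_mk, hnxt]
    have hmo : m % 2 = 1 := Nat.odd_iff.mp hodd
    rcases Nat.lt_or_ge (e.val + 1) m with h | h
    · have h0 : (e.val + 1) % m = e.val + 1 := Nat.mod_eq_of_lt h
      simp only [h0]
      rw [if_neg (by omega : ¬(e.val + 1 = 0))]
      by_cases hev : e.val % 2 = 0
      · rw [if_pos hev, if_neg (by omega)]
      · rw [if_neg hev, if_pos (by omega)]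
    · have h1 : e.val + 1 = m := by omega
      have h0 : (e.val + 1) % m = 0 := by rw [h1]; exact Nat.mod_self m
      simp only [h0, if_true]
      rw [if_pos (by omega : e.val % 2 = 0)]
  have step3 : ∏ e : Fin m, (q (nxt e)) ^ (s e) = ∏ e : Fin m, (q e) ^ (w e) := by
    rw [← Equiv.prod_comp σ (fun x => (q x) ^ (w x))]
    exact Finset.prod_congr rfl (fun e _ => by rw [hws e]; rfl)
  -- step 4
  have hsw : ∀ e : Fin m, s e + w e = if e.val = 0 then 2 else 0 := by
    intro e
    simp only [hs, hw]
    split_ifs <;> omega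
  have hqne : ∀ e, q e ≠ 0 := fun e => ne_of_gt (hq e)
  have step4 : ∏ e : Fin m, (p e) ^ (s e) = (q ⟨0, by omega⟩)^2 := by
    calc ∏ e : Fin m, (p e) ^ (s e)
        = ∏ e : Fin m, ((q e) ^ (s e) * (q (nxt e)) ^ (s e)) := by
          exact Finset.prod_congr rfl (fun e _ => by rw [hp, mul_zpow])
      _ = (∏ e : Fin m, (q e) ^ (s e)) * ∏ e : Fin m, (q (nxt e)) ^ (s e) := by
          rw [Finset.prod_mul_distrib]
      _ = (∏ e : Fin m, (q e) ^ (s e)) * ∏ e : Fin m, (q e) ^ (w e) := by rw [step3]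
      _ = ∏ e : Fin m, (q e) ^ (s e + w e) := by
          rw [← Finset.prod_mul_distrib]
          exact Finset.prod_congr rfl (fun e _ => (zpow_add₀ (hqne e) _ _).symm)
      _ = ∏ e : Fin m, (q e) ^ (if e.val = 0 then (2:ℤ) else 0) := by
          exact Finset.prod_congr rfl (fun e _ => by rw [hsw e])
      _ = (q ⟨0, by omega⟩)^2 := by
          rw [Finset.prod_eq_single (⟨0, by omega⟩ : Fin m)
            (fun e _ hne => by
              rw [if_neg (fun h => hne (Fin.ext h)), zpow_zero])
            (fun h => absurd (Finset.mem_univ _) h)]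
          rw [if_pos rfl, zpow_two, pow_two]
  calc ∏ e : Fin m, (if e.val % 2 = 0 then q e * q ⟨(e.val + 1) % m, Nat.mod_lt _ (by omega)⟩ else 1)
      = ∏ e : Fin m, ((p e) ^ (s e) * (if e.val % 2 = 0 then 1 else p e)) := by
        exact Finset.prod_congr rfl (fun e _ => step1 e)
    _ = (∏ e : Fin m, (p e) ^ (s e)) * ∏ e : Fin m, (if e.val % 2 = 0 then 1 else p e) := by
        rw [Finset.prod_mul_distrib]
    _ = (q ⟨0, by omega⟩)^2 *
        ∏ e : Fin m, (if e.val % 2 = 0 then 1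
          else q e * q ⟨(e.val + 1) % m, Nat.mod_lt _ (by omega)⟩) := by rw [step4]


lemma integral_A_eq {n : ℕ} {α : Type*} [MeasurableSpace α] (μ : Measure α)
    [IsProbabilityMeasure μ] (A : Fin n → Fin n → α → ℝ) (Ω : Fin n → Fin n → ℝ)
    (hmeas : ∀ j k, Measurable (A j k))
    (hval : ∀ j k ω, A j k ω = 0 ∨ A j k ω = 1)
    (hprob : ∀ j k, j ≠ k → μ {ω | A j k ω = 1} = ENNReal.ofReal (Ω j k))
    (j k : Fin n) (hjk : j ≠ k) (hΩnn : 0 ≤ Ω j k) :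
    ∫ ω, A j k ω ∂μ = Ω j k := by
  have hmS : MeasurableSet {ω | A j k ω = 1} := (hmeas j k) (measurableSet_singleton 1)
  have hind : A j k = Set.indicator {ω | A j k ω = 1} (1 : α → ℝ) := by
    funext ω
    rcases hval j k ω with h | h
    · rw [h]
      symm
      apply Set.indicator_of_notMem
      simp only [Set.mem_setOf_eq, h]
      norm_num
    · rw [h]
      symm
      exact Set.indicator_of_mem (by simpa [Set.mem_setOf_eq] using h) _
  calc ∫ ω, A j k ω ∂μ = ∫ ω, Set.indicator {ω | A j k ω = 1} (1 : α → ℝ) ω ∂μ := by rw [← hind]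
    _ = (μ {ω | A j k ω = 1}).toReal := integral_indicator_one hmS
    _ = Ω j k := by rw [hprob j k hjk, ENNReal.toReal_ofReal hΩnn]

/-- expected cycle-count ratio in the β-model.
The upper-triangular entries `A j k` (`j < k`) are mutually independent `{0,1}`-valued
random variables with means `Ω j k = θ j θ k / (1 + θ j θ k)`, extended symmetrically.
For odd `m`, `3 ≤ m ≤ n`, the expected alternating cycle count `φ⁽¹⁾` (factors starting
and ending with `A` along the cycle `i1 → i2 → ⋯ → i_m → i1`, over tuples of pairwise
distinct indices in `{1,…,n} \ {i1}`) equals `θ i1 ^ 2` times the expected count `φ⁽²⁾`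
with the roles of `A` and `1 - A` swapped. -/
theorem statement4 (n m : ℕ) (hm_odd : Odd m) (hm3 : 3 ≤ m) (hmn : m ≤ n)
    (θ : Fin n → ℝ) (hθ : ∀ i, 0 < θ i)
    (Ω : Fin n → Fin n → ℝ)
    (hΩ : ∀ j k, j ≠ k → Ω j k = θ j * θ k / (1 + θ j * θ k))
    {α : Type*} [MeasurableSpace α] (μ : Measure α) [IsProbabilityMeasure μ]
    (A : Fin n → Fin n → α → ℝ)
    (hmeas : ∀ j k, Measurable (A j k))
    (hsymm : ∀ j k, A k j = A j k)
    (hval : ∀ j k ω, A j k ω = 0 ∨ A j k ω = 1)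
    (hprob : ∀ j k, j ≠ k → μ {ω | A j k ω = 1} = ENNReal.ofReal (Ω j k))
    (hindep : ProbabilityTheory.iIndepFun
      (fun (q : {q : Fin n × Fin n // q.1 < q.2}) => A q.1.1 q.1.2) μ)
    (i1 : Fin n) :
    ∫ ω, (∑ g ∈ Finset.univ.filter
        (fun g : Fin m → Fin n => Function.Injective g ∧ g ⟨0, by omega⟩ = i1),
      ∏ e : Fin m,
        (if e.val % 2 = 0 then A (g e) (g ⟨(e.val + 1) % m, Nat.mod_lt _ (by omega)⟩) ω
         else 1 - A (g e) (g ⟨(e.val + 1) % m, Nat.mod_lt _ (by omega)⟩) ω)) ∂μ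
    = θ i1 ^ 2 *
      ∫ ω, (∑ g ∈ Finset.univ.filter
          (fun g : Fin m → Fin n => Function.Injective g ∧ g ⟨0, by omega⟩ = i1),
        ∏ e : Fin m,
          (if e.val % 2 = 0 then 1 - A (g e) (g ⟨(e.val + 1) % m, Nat.mod_lt _ (by omega)⟩) ω
           else A (g e) (g ⟨(e.val + 1) % m, Nat.mod_lt _ (by omega)⟩) ω)) ∂μ := by
  classical
  have hm0 : 0 < m := by omega
  have : Nonempty (Fin m) := ⟨⟨0, hm0⟩⟩
  set nxt : Fin m → Fin m := fun e => ⟨(e.val + 1) % m, Nat.mod_lt _ hm0⟩ with hnxtdef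
  -- basic facts about each factor
  have hfac1meas : ∀ (g : Fin m → Fin n) (e : Fin m),
      Measurable (fun ω => if e.val % 2 = 0 then A (g e) (g (nxt e)) ω
        else 1 - A (g e) (g (nxt e)) ω) := by
    intro g e
    split_ifs
    · exact hmeas _ _
    · exact measurable_const.sub (hmeas _ _)
  have hfac2meas : ∀ (g : Fin m → Fin n) (e : Fin m),
      Measurable (fun ω => if e.val % 2 = 0 then 1 - A (g e) (g (nxt e)) ω
        else A (g e) (g (nxt e)) ω) := by
    intro g e
    split_ifs
    · exact measurable_const.sub (hmeas _ _)
    · exact hmeas _ _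
  have hfac1val : ∀ (g : Fin m → Fin n) (e : Fin m) (ω : α),
      (if e.val % 2 = 0 then A (g e) (g (nxt e)) ω else 1 - A (g e) (g (nxt e)) ω) = 0 ∨
      (if e.val % 2 = 0 then A (g e) (g (nxt e)) ω else 1 - A (g e) (g (nxt e)) ω) = 1 := by
    intro g e ω
    rcases hval (g e) (g (nxt e)) ω with h | h <;> split_ifs <;> simp [h]
  have hfac2val : ∀ (g : Fin m → Fin n) (e : Fin m) (ω : α),
      (if e.val % 2 = 0 then 1 - A (g e) (g (nxt e)) ω else A (g e) (g (nxt e)) ω) = 0 ∨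
      (if e.val % 2 = 0 then 1 - A (g e) (g (nxt e)) ω else A (g e) (g (nxt e)) ω) = 1 := by
    intro g e ω
    rcases hval (g e) (g (nxt e)) ω with h | h <;> split_ifs <;> simp [h]
  have hInt1 : ∀ g : Fin m → Fin n, Integrable (fun ω => ∏ e : Fin m,
      (if e.val % 2 = 0 then A (g e) (g (nxt e)) ω else 1 - A (g e) (g (nxt e)) ω)) μ :=
    fun g => integrable01 μ _ (Finset.measurable_prod _ (fun e _ => hfac1meas g e))
      (prod01 _ _ (fun e _ => hfac1val g e))
  have hInt2 : ∀ g : Fin m → Fin n, Integrable (fun ω => ∏ e : Fin m,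
      (if e.val % 2 = 0 then 1 - A (g e) (g (nxt e)) ω else A (g e) (g (nxt e)) ω)) μ :=
    fun g => integrable01 μ _ (Finset.measurable_prod _ (fun e _ => hfac2meas g e))
      (prod01 _ _ (fun e _ => hfac2val g e))
  -- key per-g computation
  have key : ∀ g : Fin m → Fin n, Function.Injective g → g ⟨0, hm0⟩ = i1 →
      (∫ ω, ∏ e : Fin m,
        (if e.val % 2 = 0 then A (g e) (g (nxt e)) ω else 1 - A (g e) (g (nxt e)) ω) ∂μ)
      = θ i1 ^ 2 * ∫ ω, ∏ e : Fin m,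
        (if e.val % 2 = 0 then 1 - A (g e) (g (nxt e)) ω else A (g e) (g (nxt e)) ω) ∂μ := by
    intro g hginj hg0
    -- vertices along the cycle are distinct consecutive
    have hne : ∀ e : Fin m, g e ≠ g (nxt e) := by
      intro e h
      have he := hginj h
      have : e.val = (e.val + 1) % m := congrArg Fin.val he
      rcases Nat.lt_or_ge (e.val + 1) m with hlt | hge
      · rw [Nat.mod_eq_of_lt hlt] at this; omega
      · have h1 : e.val + 1 = m := by have := e.isLt; omega
        rw [h1, Nat.mod_self] at this
        have := e.isLt; omega
    -- oriented edge map
    set σ : Fin m → {q : Fin n × Fin n // q.1 < q.2} := fun e =>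
      if h : g e < g (nxt e) then ⟨(g e, g (nxt e)), h⟩
      else ⟨(g (nxt e), g e), lt_of_le_of_ne (not_lt.mp h) (fun hh => hne e hh.symm)⟩
      with hσdef
    have hB : ∀ e : Fin m, A (g e) (g (nxt e)) = A (σ e).1.1 (σ e).1.2 := by
      intro e
      simp only [hσdef]
      split_ifs with h
      · rfl
      · exact hsymm (g (nxt e)) (g e)
    have hpair : ∀ e : Fin m, ((σ e).1.1 = g e ∧ (σ e).1.2 = g (nxt e)) ∨
        ((σ e).1.1 = g (nxt e) ∧ (σ e).1.2 = g e) := by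
      intro e
      simp only [hσdef]
      split_ifs with h
      · exact Or.inl ⟨rfl, rfl⟩
      · exact Or.inr ⟨rfl, rfl⟩
    -- injectivity of σ
    have keynat : ∀ x : ℕ, x < m → ((x + 1) % m + 1) % m ≠ x := by
      intro x hx
      rcases Nat.lt_or_ge (x + 1) m with h | h
      · rw [Nat.mod_eq_of_lt h]
        rcases Nat.lt_or_ge (x + 2) m with h2 | h2
        · rw [Nat.mod_eq_of_lt h2]; omega
        · have : x + 2 = m := by omega
          rw [this, Nat.mod_self]; omega
      · have h1 : x + 1 = m := by omega
        rw [h1, Nat.mod_self]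
        rw [Nat.mod_eq_of_lt (by omega : 0 + 1 < m)]
        omega
    have hnn : ∀ e : Fin m, nxt (nxt e) ≠ e := by
      intro e h
      exact keynat e.val e.isLt (congrArg Fin.val h)
    have hσinj : Function.Injective σ := by
      intro a b hab
      have h1 := hpair a
      have h2 := hpair b
      rw [hab] at h1
      rcases h1 with ⟨ha1, ha2⟩ | ⟨ha1, ha2⟩ <;> rcases h2 with ⟨hb1, hb2⟩ | ⟨hb1, hb2⟩
      · exact hginj (ha1.symm.trans hb1)
      · have e1 : a = nxt b := hginj (ha1.symm.trans hb1)
        have e2 : nxt a = b := hginj (ha2.symm.trans hb2)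
        rw [e1] at e2
        exact absurd e2 (hnn b)
      · have e1 : nxt a = b := hginj (ha1.symm.trans hb1)
        have e2 : a = nxt b := hginj (ha2.symm.trans hb2)
        rw [e2] at e1
        exact absurd e1 (hnn b)
      · exact hginj (ha2.symm.trans hb2)
    -- derived independent families
    set F1 : Fin m → ℝ → ℝ := fun e x => if e.val % 2 = 0 then x else 1 - x with hF1def
    set F2 : Fin m → ℝ → ℝ := fun e x => if e.val % 2 = 0 then 1 - x else x with hF2def
    have hF1meas : ∀ e, Measurable (F1 e) := by
      intro e; simp only [hF1def]
      split_ifs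
      · exact measurable_id
      · exact measurable_const.sub measurable_id
    have hF2meas : ∀ e, Measurable (F2 e) := by
      intro e; simp only [hF2def]
      split_ifs
      · exact measurable_const.sub measurable_id
      · exact measurable_id
    have hreidx := iIndepFun_reindex hindep σ hσinj
    have hY1indep := hreidx.comp F1 hF1meas
    have hY2indep := hreidx.comp F2 hF2meas
    set Y1 : Fin m → α → ℝ := fun e ω => F1 e (A (σ e).1.1 (σ e).1.2 ω) with hY1def
    set Y2 : Fin m → α → ℝ := fun e ω => F2 e (A (σ e).1.1 (σ e).1.2 ω) with hY2def
    have hY1indep' : ProbabilityTheory.iIndepFun Y1 μ := hY1indep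
    have hY2indep' : ProbabilityTheory.iIndepFun Y2 μ := hY2indep
    have hY1meas : ∀ e, Measurable (Y1 e) := fun e => (hF1meas e).comp (hmeas _ _)
    have hY2meas : ∀ e, Measurable (Y2 e) := fun e => (hF2meas e).comp (hmeas _ _)
    have hY1val : ∀ e ω, Y1 e ω = 0 ∨ Y1 e ω = 1 := by
      intro e ω
      simp only [hY1def, hF1def]
      rcases hval (σ e).1.1 (σ e).1.2 ω with h | h <;> split_ifs <;> simp [h]
    have hY2val : ∀ e ω, Y2 e ω = 0 ∨ Y2 e ω = 1 := by
      intro e ω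
      simp only [hY2def, hF2def]
      rcases hval (σ e).1.1 (σ e).1.2 ω with h | h <;> split_ifs <;> simp [h]
    -- identify the integrands with Y products
    have hfe1 : ∀ e : Fin m, (fun ω => if e.val % 2 = 0 then A (g e) (g (nxt e)) ω
        else 1 - A (g e) (g (nxt e)) ω) = Y1 e := by
      intro e
      funext ω
      simp only [hY1def, hF1def, ← hB e]
    have hfe2 : ∀ e : Fin m, (fun ω => if e.val % 2 = 0 then 1 - A (g e) (g (nxt e)) ω
        else A (g e) (g (nxt e)) ω) = Y2 e := by
      intro e
      funext ω
      simp only [hY2def, hF2def, ← hB e]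
    -- expectations of single factors
    have hgnei : ∀ e : Fin m, g e ≠ g (nxt e) := hne
    set p : Fin m → ℝ := fun e => θ (g e) * θ (g (nxt e)) with hpdef
    have hppos : ∀ e, 0 < p e := fun e => mul_pos (hθ _) (hθ _)
    have h1p : ∀ e, (0:ℝ) < 1 + p e := fun e => by have := hppos e; linarith
    have hΩe : ∀ e : Fin m, Ω (g e) (g (nxt e)) = p e / (1 + p e) := fun e =>
      hΩ (g e) (g (nxt e)) (hgnei e)
    have hΩnn : ∀ e : Fin m, 0 ≤ Ω (g e) (g (nxt e)) := by
      intro e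
      rw [hΩe e]
      exact le_of_lt (div_pos (hppos e) (h1p e))
    have hEA : ∀ e : Fin m, ∫ ω, A (g e) (g (nxt e)) ω ∂μ = p e / (1 + p e) := by
      intro e
      rw [integral_A_eq μ A Ω hmeas hval hprob _ _ (hgnei e) (hΩnn e)]
      exact hΩe e
    have hIntA : ∀ e : Fin m, Integrable (fun ω => A (g e) (g (nxt e)) ω) μ :=
      fun e => integrable01 μ _ (hmeas _ _) (hval _ _)
    have hE1A : ∀ e : Fin m, ∫ ω, (1 - A (g e) (g (nxt e)) ω) ∂μ = 1 / (1 + p e) := by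
      intro e
      rw [integral_sub (integrable_const 1) (hIntA e), integral_const, hEA e]
      have h0 := h1p e
      simp only [measure_univ, probReal_univ, ENNReal.toReal_one, smul_eq_mul, mul_one, one_smul]
      field_simp
      ring
    have hEY1 : ∀ e : Fin m, ∫ ω, Y1 e ω ∂μ
        = (if e.val % 2 = 0 then p e else 1) * (1 / (1 + p e)) := by
      intro e
      rw [← hfe1 e]
      by_cases h : e.val % 2 = 0
      · simp only [if_pos h]
        rw [hEA e]
        field_simp
      · simp only [if_neg h]
        rw [hE1A e]
        ring
    have hEY2 : ∀ e : Fin m, ∫ ω, Y2 e ω ∂μ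
        = (if e.val % 2 = 0 then 1 else p e) * (1 / (1 + p e)) := by
      intro e
      rw [← hfe2 e]
      by_cases h : e.val % 2 = 0
      · simp only [if_pos h]
        rw [hE1A e]
        ring
      · simp only [if_neg h]
        rw [hEA e]
        field_simp
    -- telescoping
    have htel := telescope_prod m hm3 hm_odd (fun e => θ (g e)) (fun e => hθ (g e))
    have htel' : (∏ e : Fin m, (if e.val % 2 = 0 then p e else 1))
        = θ i1 ^ 2 * ∏ e : Fin m, (if e.val % 2 = 0 then 1 else p e) := by
      rw [← hg0]
      exact htel
    calc ∫ ω, ∏ e : Fin m,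
          (if e.val % 2 = 0 then A (g e) (g (nxt e)) ω else 1 - A (g e) (g (nxt e)) ω) ∂μ
        = ∫ ω, ∏ e : Fin m, Y1 e ω ∂μ := by
          congr 1
          funext ω
          exact Finset.prod_congr rfl (fun e _ => congrFun (hfe1 e) ω)
      _ = ∏ e : Fin m, ∫ ω, Y1 e ω ∂μ :=
          integral_prod01 μ Y1 hY1meas hY1val hY1indep' Finset.univ
      _ = ∏ e : Fin m, ((if e.val % 2 = 0 then p e else 1) * (1 / (1 + p e))) :=
          Finset.prod_congr rfl (fun e _ => hEY1 e)
      _ = (∏ e : Fin m, (if e.val % 2 = 0 then p e else 1)) * ∏ e : Fin m, (1 / (1 + p e)) :=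
          Finset.prod_mul_distrib
      _ = θ i1 ^ 2 * ((∏ e : Fin m, (if e.val % 2 = 0 then 1 else p e))
            * ∏ e : Fin m, (1 / (1 + p e))) := by rw [htel']; ring
      _ = θ i1 ^ 2 * ∏ e : Fin m, ((if e.val % 2 = 0 then 1 else p e) * (1 / (1 + p e))) := by
          rw [Finset.prod_mul_distrib]
      _ = θ i1 ^ 2 * ∏ e : Fin m, ∫ ω, Y2 e ω ∂μ := by
          rw [Finset.prod_congr rfl (fun e _ => (hEY2 e).symm)]
      _ = θ i1 ^ 2 * ∫ ω, ∏ e : Fin m, Y2 e ω ∂μ := by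
          rw [integral_prod01 μ Y2 hY2meas hY2val hY2indep' Finset.univ]
      _ = θ i1 ^ 2 * ∫ ω, ∏ e : Fin m,
            (if e.val % 2 = 0 then 1 - A (g e) (g (nxt e)) ω else A (g e) (g (nxt e)) ω) ∂μ := by
          congr 1
          congr 1
          funext ω
          exact Finset.prod_congr rfl (fun e _ => (congrFun (hfe2 e) ω).symm)
  -- assemble
  rw [integral_finset_sum _ (fun g _ => hInt1 g), integral_finset_sum _ (fun g _ => hInt2 g),
    Finset.mul_sum]
  apply Finset.sum_congr rfl
  intro g hg
  obtain ⟨hginj, hg0⟩ := (Finset.mem_filter.mp hg).2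
  exact key g hginj hg0
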